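/- The class P is closed under finite products: if X and Y belong to P, then X × Y belongs to P. -/

import Mathlib

open scoped Topology
open ContinuousMap

noncomputable section

/-- The map on generalized loops induced by a continuous map. -/
def GenLoop.push {X Y : Type} [TopologicalSpace X] [TopologicalSpace Y] {N : Type} (f : C(X, Y))
    {x : X} (p : GenLoop N X x) : GenLoop N Y (f x) :=
  ⟨f.comp p.1, fun t ht => by simp [p.2 t ht]⟩

/-- The map induced by a continuous map on homotopy groups (as pointed sets). -/
def piMap {X Y : Type} [TopologicalSpace X] [TopologicalSpace Y] (f : C(X, Y)) (N : Type) (x : X) :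
    HomotopyGroup N X x → HomotopyGroup N Y (f x) :=
  Quotient.map (GenLoop.push f) (fun _ _ h => Nonempty.map (fun H => H.compContinuousMap f) h)

/-- A weakly contractible space: all homotopy groups (including `π₀`) are trivial. -/
def WeaklyContractible (X : Type) [TopologicalSpace X] : Prop :=
  Nonempty X ∧ ∀ (x : X) (n : ℕ), Subsingleton (HomotopyGroup (Fin n) X x)

/-- A weak homotopy equivalence: induces bijections on all homotopy groups at all basepoints
(including `π₀`). -/
def IsWeakHomotopyEquiv {X Y : Type} [TopologicalSpace X] [TopologicalSpace Y]
    (f : C(X, Y)) : Prop :=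
  (Nonempty Y → Nonempty X) ∧ ∀ (x : X) (n : ℕ), Function.Bijective (piMap f (Fin n) x)

/-- `X` is a homotopy retract of `Y`. -/
def HomotopyRetract (X Y : Type) [TopologicalSpace X] [TopologicalSpace Y] : Prop :=
  ∃ (i : C(X, Y)) (r : C(Y, X)), (r.comp i).Homotopic (ContinuousMap.id X)

/-- The underlying map of a homotopy equivalence. -/
def IsHEquivMap {X Y : Type} [TopologicalSpace X] [TopologicalSpace Y] (f : C(X, Y)) : Prop :=
  ∃ g : C(Y, X), (g.comp f).Homotopic (ContinuousMap.id X) ∧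
    (f.comp g).Homotopic (ContinuousMap.id Y)

/-- The homotopy fibre of `f` over `b`. -/
def HFiber {E B : Type} [TopologicalSpace E] [TopologicalSpace B] (f : C(E, B)) (b : B) : Type :=
  { z : E × C(unitInterval, B) // z.2 0 = f z.1 ∧ z.2 1 = b }

instance {E B : Type} [TopologicalSpace E] [TopologicalSpace B] (f : C(E, B)) (b : B) :
    TopologicalSpace (HFiber f b) :=
  instTopologicalSpaceSubtype

/-- The projection from the homotopy fibre to the total space. -/
def HFiber.proj {E B : Type} [TopologicalSpace E] [TopologicalSpace B] (f : C(E, B)) (b : B) :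
    C(HFiber f b, E) :=
  ⟨fun z => z.1.1, by fun_prop⟩

/-- Comparison map from `F` to the homotopy fibre of `p`, given a null-homotopy of `p ∘ i`. -/
def hfibCompare {F E B : Type} [TopologicalSpace F] [TopologicalSpace E] [TopologicalSpace B]
    (i : C(F, E)) (p : C(E, B)) (b : B)
    (H : ContinuousMap.Homotopy (p.comp i) (ContinuousMap.const F b)) : C(F, HFiber p b) where
  toFun z := ⟨(i z, (H.toContinuousMap.comp ContinuousMap.prodSwap).curry z),
    by simp, by simp⟩
  continuous_toFun := by
    apply Continuous.subtype_mk
    exact i.continuous.prodMk ((H.toContinuousMap.comp ContinuousMap.prodSwap).curry).continuous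

/-- A sequence `F → E → B` is a homotopy fibration if `p ∘ i` is null-homotopic via a homotopy
for which the induced comparison map from `F` to the homotopy fibre of `p` is a homotopy
equivalence. -/
def IsHomotopyFibration {F E B : Type} [TopologicalSpace F] [TopologicalSpace E]
    [TopologicalSpace B] (i : C(F, E)) (p : C(E, B)) : Prop :=
  ∃ (b : B) (H : ContinuousMap.Homotopy (p.comp i) (ContinuousMap.const F b)),
    IsHEquivMap (hfibCompare i p b H)


open CategoryTheory


/-- The singular chain complex functor with coefficients in a commutative ring `R`. -/
def singularChains (R : Type) [CommRing R] : TopCat.{0} ⥤ ChainComplex (ModuleCat.{0} R) ℕ :=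
  TopCat.toSSet ⋙ ((SimplicialObject.whiskering _ _).obj (ModuleCat.free R)) ⋙
    AlgebraicTopology.alternatingFaceMapComplex _

/-- Singular homology of a space with coefficients in `R`. -/
def SH (R : Type) [CommRing R] (n : ℕ) (X : Type) [TopologicalSpace X] : ModuleCat R :=
  ((singularChains R).obj (TopCat.of X)).homology n

/-- The induced map on singular homology. -/
def SHmap (R : Type) [CommRing R] (n : ℕ) {X Y : Type} [TopologicalSpace X] [TopologicalSpace Y]
    (f : C(X, Y)) : SH R n X ⟶ SH R n Y :=
  HomologicalComplex.homologyMap ((singularChains R).map (TopCat.ofHom f)) n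

/-- An abelian group is a finitely generated `R`-module (for some compatible `R`-module
structure). -/
def IsFGModuleOver (R : Type) [CommRing R] (M : Type) [AddCommGroup M] : Prop :=
  ∃ (N : Type) (_ : AddCommGroup N) (_ : Module R N),
    Module.Finite R N ∧ Nonempty (M ≃+ N)

/-- A (multiplicative) group is, up to isomorphism, a finitely generated `R`-module. -/
def IsFGMulOver (R : Type) [CommRing R] (G : Type) [Group G] : Prop :=
  ∃ (N : Type) (_ : AddCommGroup N) (_ : Module R N),
    Module.Finite R N ∧ Nonempty (G ≃* Multiplicative N)

/-- A space has finite type over `R`: each reduced integral homology group is a finitely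
generated `R`-module.  (For connected spaces and `R = ℤ` this is the usual notion of
finite type.) -/
def FiniteTypeOver (R : Type) [CommRing R] (X : Type) [TopologicalSpace X] : Prop :=
  ∀ n : ℕ, 1 ≤ n → IsFGModuleOver R (SH ℤ n X)

/-- The ideal `(p) ⊆ ℤ`. -/
def pIdeal (p : ℕ) : Ideal ℤ := Ideal.span {(p : ℤ)}

instance pIdeal.isPrime (p : ℕ) [hp : Fact p.Prime] : (pIdeal p).IsPrime := by
  rw [pIdeal, Ideal.span_singleton_prime (by exact_mod_cast hp.out.ne_zero)]
  exact_mod_cast Nat.prime_iff_prime_int.mp hp.out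

/-- The integers localized at the prime `p`. -/
abbrev Zloc (p : ℕ) [Fact p.Prime] : Type := Localization.AtPrime (pIdeal p)

/-- A nonempty path-connected space all of whose homology with coefficients in `R` vanishes
in positive degrees, i.e. whose reduced `R`-homology vanishes. -/
def AcyclicOver (R : Type) [CommRing R] (X : Type) [TopologicalSpace X] : Prop :=
  Nonempty X ∧ PathConnectedSpace X ∧ ∀ n : ℕ, 1 ≤ n → Subsingleton (SH R n X)

/-- An acyclic space: reduced integral homology vanishes. -/
def AcyclicSpace (X : Type) [TopologicalSpace X] : Prop := AcyclicOver ℤ X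

/-- A homology rational sphere: a connected space with `H̃⋆(X;ℤ) ≅ ℚ`, concentrated in a
single (positive) degree. -/
def IsHomologyRationalSphere (X : Type) [TopologicalSpace X] : Prop :=
  Nonempty X ∧ PathConnectedSpace X ∧ ∃ d : ℕ, 1 ≤ d ∧ Nonempty ((SH ℤ d X) ≃+ ℚ) ∧
    ∀ n : ℕ, 1 ≤ n → n ≠ d → Subsingleton (SH ℤ n X)



/-! ### Local spaces, GEMs and generalised Postnikov towers -/

/-- `S`-local space: the `k`-th power map on all homotopy groups is bijective
for every `k` with `S k`. -/
def SLocalSpace (S : ℕ → Prop) (X : Type) [TopologicalSpace X] : Prop :=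
  ∀ (x : X) (n k : ℕ), S k →
    Function.Bijective (fun g : HomotopyGroup (Fin (n + 1)) X x => g ^ k)

/-- The family of exponents inverted in `p`-local spaces. -/
def pInv (p : ℕ) : ℕ → Prop := fun k => k ≠ 0 ∧ ¬ (p ∣ k)

/-- The family of exponents inverted in rational spaces. -/
def ratInv : ℕ → Prop := fun k => k ≠ 0

/-- No exponents inverted (integral setting). -/
def intInv : ℕ → Prop := fun _ => False

/-- Homotopy groups are finitely generated `R`-modules in every degree. -/
def PiFiniteOver (R : Type) [CommRing R] (X : Type) [TopologicalSpace X] : Prop :=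
  ∀ (x : X) (n : ℕ), IsFGMulOver R (HomotopyGroup (Fin (n + 1)) X x)

/-- An Eilenberg-MacLane space `K(A, n+1)` for some abelian group `A`. -/
def IsEMSpace (Y : Type) [TopologicalSpace Y] (n : ℕ) : Prop :=
  Nonempty Y ∧ PathConnectedSpace Y ∧
    (∀ (y : Y) (k : ℕ), k ≠ n + 1 → Subsingleton (HomotopyGroup (Fin k) Y y)) ∧
    (∀ (y : Y) (a b : HomotopyGroup (Fin (n + 1)) Y y), a * b = b * a)

/-- A generalised Eilenberg-MacLane space (GEM): a space homotopy equivalent to a (possibly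
infinite) product of Eilenberg-MacLane spaces of abelian groups. -/
def IsGEM (Z : Type) [TopologicalSpace Z] : Prop :=
  ∃ (ι : Type) (Y : ι → Type) (_ : ∀ i, TopologicalSpace (Y i)) (n : ι → ℕ),
    (∀ i, IsEMSpace (Y i) (n i)) ∧ Nonempty (ContinuousMap.HomotopyEquiv Z (∀ i, Y i))

/-- One step of a generalised Postnikov tower: `q : Z' → Z` is, up to homotopy, the fibre
inclusion of a homotopy fibration `Z' → Z → K` with `K` a `c`-connected GEM which is `S`-local,
and of finite type over `R` when `ft = true`. -/
def GPTStep (R : Type) [CommRing R] (S : ℕ → Prop) (ft : Bool) (c : ℕ)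
    {Z' Z : Type} [TopologicalSpace Z'] [TopologicalSpace Z] (q : C(Z', Z)) : Prop :=
  ∃ (K : Type) (_ : TopologicalSpace K) (k : C(Z, K)),
    IsGEM K ∧ (∀ (y : K) (j : ℕ), j ≤ c → Subsingleton (HomotopyGroup (Fin j) K y)) ∧
    SLocalSpace S K ∧ (ft = true → PiFiniteOver R K) ∧ IsHomotopyFibration q k

/-- `X` admits a generalised Postnikov tower of length `l` whose principal fibrations have as
fibres `c`-connected GEMs which are `S`-local, and of finite type over `R` when `ft = true`.
(`c = 1` gives the usual simply-connected GEM condition.) -/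
def HasGPT (R : Type) [CommRing R] (S : ℕ → Prop) (ft : Bool) (c : ℕ)
    (X : Type) [TopologicalSpace X] (l : ℕ) : Prop :=
  ∃ (Z : ℕ → Type) (_ : ∀ n, TopologicalSpace (Z n)) (q : ∀ n, C(Z (n + 1), Z n)),
    WeaklyContractible (Z 0) ∧ (∀ n < l, GPTStep R S ft c (q n)) ∧
    ∃ f : C(X, Z l), IsWeakHomotopyEquiv f

/-- A universal cover: a covering map with simply connected total space. -/
def IsUniversalCover {X' X : Type} [TopologicalSpace X'] [TopologicalSpace X]
    (q : C(X', X)) : Prop :=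
  IsCoveringMap (q : X' → X) ∧ SimplyConnectedSpace X'

/-! ### The classes `P`, `F`, `K` and their local analogues -/

/-- The class `P` (in its `(R, S, loc)`-parametrised form): the minimal class, closed under
homotopy retracts, of connected spaces (`S`-local and of finite type over `R` when
`loc = true`) whose universal covers admit finite type (over `R`) `S`-local generalised
Postnikov towers of finite length. -/
def ClassPGen (R : Type) [CommRing R] (S : ℕ → Prop) (loc : Bool)
    (X : Type) [TopologicalSpace X] : Prop :=
  ConnectedSpace X ∧ (loc = true → SLocalSpace S X ∧ FiniteTypeOver R X) ∧
  ∃ (Y : Type) (_ : TopologicalSpace Y), ConnectedSpace Y ∧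
    (loc = true → SLocalSpace S Y ∧ FiniteTypeOver R Y) ∧
    (∃ (Y' : Type) (_ : TopologicalSpace Y') (c : C(Y', Y)), IsUniversalCover c ∧
      ∃ l : ℕ, HasGPT R S true 1 Y' l) ∧
    HomotopyRetract X Y

/-- The class `𝐏` of the paper. -/
def ClassP (X : Type) [TopologicalSpace X] : Prop := ClassPGen ℤ intInv false X

/-- The class `𝐏ₚ` of the paper. -/
def ClassPp (p : ℕ) [Fact p.Prime] (X : Type) [TopologicalSpace X] : Prop :=
  ClassPGen (Zloc p) (pInv p) true X

/-- The class `𝐏₀` of the paper. -/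
def ClassP0 (X : Type) [TopologicalSpace X] : Prop := ClassPGen ℚ ratInv true X

/-- The class `F` (parametrised): connected spaces whose universal covers are of finite type
(over `R`) and have non-trivial homotopy groups in only finitely many dimensions. -/
def ClassFGen (R : Type) [CommRing R] (S : ℕ → Prop) (loc : Bool)
    (X : Type) [TopologicalSpace X] : Prop :=
  ConnectedSpace X ∧ (loc = true → SLocalSpace S X ∧ FiniteTypeOver R X) ∧
  ∃ (X' : Type) (_ : TopologicalSpace X') (c : C(X', X)), IsUniversalCover c ∧
    FiniteTypeOver R X' ∧ (loc = true → SLocalSpace S X') ∧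
    ∃ N : ℕ, ∀ n ≥ N, ∀ x' : X', Subsingleton (HomotopyGroup (Fin (n + 1)) X' x')

/-- The class `𝐅` of the paper. -/
def ClassF (X : Type) [TopologicalSpace X] : Prop := ClassFGen ℤ intInv false X

/-- The class `𝐅ₚ` of the paper. -/
def ClassFp (p : ℕ) [Fact p.Prime] (X : Type) [TopologicalSpace X] : Prop :=
  ClassFGen (Zloc p) (pInv p) true X

/-- The class `𝐅₀` of the paper. -/
def ClassF0 (X : Type) [TopologicalSpace X] : Prop := ClassFGen ℚ ratInv true X

/-- `X` admits a classical Postnikov tower (consisting of stages `P n`, comparison maps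
`f n : X → P n`, structure maps `q n : P (n+1) → P n` and `k`-invariants
`k n : P n → L n` with `L n` an Eilenberg-MacLane space of dimension `n + 2`) in which all but
finitely many of the `k`-invariants are trivial (null-homotopic). -/
def HasFinitelyManyKInvariants (X : Type) [TopologicalSpace X] : Prop :=
  ∃ (P : ℕ → Type) (_ : ∀ n, TopologicalSpace (P n))
    (f : ∀ n, C(X, P n)) (q : ∀ n, C(P (n + 1), P n))
    (L : ℕ → Type) (_ : ∀ n, TopologicalSpace (L n)) (k : ∀ n, C(P n, L n)),
    WeaklyContractible (P 0) ∧
    (∀ n, (f n).Homotopic ((q n).comp (f (n + 1)))) ∧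
    (∀ (n : ℕ) (x : X) (j : ℕ), j ≤ n → Function.Bijective (piMap (f n) (Fin j) x)) ∧
    (∀ (n : ℕ) (y : P n) (j : ℕ), j > n → Subsingleton (HomotopyGroup (Fin j) (P n) y)) ∧
    (∀ n, IsEMSpace (L n) (n + 1)) ∧
    (∀ n, IsHomotopyFibration (q n) (k n)) ∧
    Set.Finite {n : ℕ | ¬ ∃ y : L n, (k n).Homotopic (ContinuousMap.const (P n) y)}

/-- The class `K` (parametrised): connected spaces whose universal covers are of finite type
(over `R`) and have only finitely many non-trivial `k`-invariants. -/
def ClassKGen (R : Type) [CommRing R] (S : ℕ → Prop) (loc : Bool)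
    (X : Type) [TopologicalSpace X] : Prop :=
  ConnectedSpace X ∧ (loc = true → SLocalSpace S X ∧ FiniteTypeOver R X) ∧
  ∃ (X' : Type) (_ : TopologicalSpace X') (c : C(X', X)), IsUniversalCover c ∧
    FiniteTypeOver R X' ∧ (loc = true → SLocalSpace S X') ∧
    HasFinitelyManyKInvariants X'

/-- The class `𝐊` of the paper. -/
def ClassK (X : Type) [TopologicalSpace X] : Prop := ClassKGen ℤ intInv false X

/-- The class `𝐊ₚ` of the paper. -/
def ClassKp (p : ℕ) [Fact p.Prime] (X : Type) [TopologicalSpace X] : Prop :=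
  ClassKGen (Zloc p) (pInv p) true X

/-- The class `𝐊₀` of the paper. -/
def ClassK0 (X : Type) [TopologicalSpace X] : Prop := ClassKGen ℚ ratInv true X

/-- The class `𝐄₀` of the paper: connected spaces whose universal cover is rational elliptic,
i.e. a rational space with finite dimensional rational homotopy and rational homology. -/
def ClassE0 (X : Type) [TopologicalSpace X] : Prop :=
  ConnectedSpace X ∧
  ∃ (X' : Type) (_ : TopologicalSpace X') (c : C(X', X)), IsUniversalCover c ∧
    SLocalSpace ratInv X' ∧
    (∀ (x' : X') (n : ℕ), IsFGMulOver ℚ (HomotopyGroup (Fin (n + 1)) X' x')) ∧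
    (∃ N : ℕ, ∀ n ≥ N, ∀ x' : X', Subsingleton (HomotopyGroup (Fin (n + 1)) X' x')) ∧
    (∀ n : ℕ, 1 ≤ n → IsFGModuleOver ℚ (SH ℚ n X')) ∧
    (∃ N : ℕ, ∀ n ≥ N, Subsingleton (SH ℚ n X'))

/-! ### Asphericity and connectivity -/

/-- An aspherical (`K(π,1)`) space. -/
def IsAspherical (X : Type) [TopologicalSpace X] : Prop :=
  Nonempty X ∧ PathConnectedSpace X ∧
    ∀ (x : X) (n : ℕ), 2 ≤ n → Subsingleton (HomotopyGroup (Fin n) X x)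

/-- `X` is a `K(G, 1)`. -/
def IsKpi1Of (X : Type) [TopologicalSpace X] (G : Type) [Group G] : Prop :=
  IsAspherical X ∧ ∃ x : X, Nonempty (FundamentalGroup X x ≃* G)

/-- An `r`-connected space: homotopy groups vanish in degrees `≤ r`. -/
def IsNConnected (r : ℕ) (X : Type) [TopologicalSpace X] : Prop :=
  Nonempty X ∧ ∀ (x : X) (k : ℕ), k ≤ r → Subsingleton (HomotopyGroup (Fin k) X x)


/-! ### Cones, suspensions, smash products and pushouts -/

/-- The (unreduced) cone on `X`: `X × I` with `X × {1}` collapsed to a point. -/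
def TopCone (X : Type) [TopologicalSpace X] : Type :=
  Quot (fun a b : X × unitInterval => a.2 = 1 ∧ b.2 = 1)

instance (X : Type) [TopologicalSpace X] : TopologicalSpace (TopCone X) :=
  inferInstanceAs (TopologicalSpace (Quot _))

/-- The inclusion of `X` into the base of the cone. -/
def coneIncl (X : Type) [TopologicalSpace X] : C(X, TopCone X) :=
  ⟨fun x => Quot.mk _ (x, 0), continuous_quot_mk.comp (by fun_prop)⟩

/-- The map of cones induced by a continuous map. -/
def coneMap {X Y : Type} [TopologicalSpace X] [TopologicalSpace Y] (f : C(X, Y)) :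
    C(TopCone X, TopCone Y) :=
  ⟨Quot.lift (fun a => Quot.mk _ (f a.1, a.2))
      (fun _ _ h => Quot.sound ⟨h.1, h.2⟩),
    continuous_quot_lift _ (continuous_quot_mk.comp (by fun_prop))⟩

theorem coneMap_mapsTo {X Y : Type} [TopologicalSpace X] [TopologicalSpace Y] (f : C(X, Y)) :
    Set.MapsTo (coneMap f) (Set.range (coneIncl X)) (Set.range (coneIncl Y)) := by
  rintro _ ⟨x, rfl⟩; exact ⟨f x, rfl⟩

/-- The reduced suspension of a pointed space: `X × I` with `X × {0} ∪ X × {1} ∪ {x₀} × I`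
collapsed to a point. -/
def RSusp (X : Type) [TopologicalSpace X] (x0 : X) : Type :=
  Quot (fun a b : X × unitInterval =>
    (a.2 = 0 ∨ a.2 = 1 ∨ a.1 = x0) ∧ (b.2 = 0 ∨ b.2 = 1 ∨ b.1 = x0))

instance (X : Type) [TopologicalSpace X] (x0 : X) : TopologicalSpace (RSusp X x0) :=
  inferInstanceAs (TopologicalSpace (Quot _))

/-- The basepoint of the reduced suspension. -/
def RSusp.pt (X : Type) [TopologicalSpace X] (x0 : X) : RSusp X x0 :=
  Quot.mk _ (x0, 0)

/-- The map of reduced suspensions induced by a pointed continuous map. -/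
def rsuspMap {X Y : Type} [TopologicalSpace X] [TopologicalSpace Y] {x0 : X} {y0 : Y}
    (f : C(X, Y)) (hf : f x0 = y0) : C(RSusp X x0, RSusp Y y0) :=
  ⟨Quot.lift (fun a => Quot.mk _ (f a.1, a.2))
      (by
        rintro a b ⟨ha, hb⟩
        refine Quot.sound ⟨?_, ?_⟩ <;>
          [rcases ha with h | h | h; rcases hb with h | h | h] <;>
          simp [h, hf]),
    continuous_quot_lift _ (continuous_quot_mk.comp (by fun_prop))⟩

/-- The half-smash `B ⋊ X = (B × X)/(B × {x₀})`. -/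
def HalfSmash (B X : Type) [TopologicalSpace B] [TopologicalSpace X] (x0 : X) : Type :=
  Quot (fun u v : B × X => u.2 = x0 ∧ v.2 = x0)

instance (B X : Type) [TopologicalSpace B] [TopologicalSpace X] (x0 : X) :
    TopologicalSpace (HalfSmash B X x0) :=
  inferInstanceAs (TopologicalSpace (Quot _))

/-- The smash product `A ∧ X = (A × X)/(A × {x₀} ∪ {a₀} × X)`. -/
def Smash (A X : Type) [TopologicalSpace A] [TopologicalSpace X] (a0 : A) (x0 : X) : Type :=
  Quot (fun u v : A × X => (u.1 = a0 ∨ u.2 = x0) ∧ (v.1 = a0 ∨ v.2 = x0))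

instance (A X : Type) [TopologicalSpace A] [TopologicalSpace X] (a0 : A) (x0 : X) :
    TopologicalSpace (Smash A X a0 x0) :=
  inferInstanceAs (TopologicalSpace (Quot _))

/-- The basepoint of a smash product. -/
def Smash.pt {A X : Type} [TopologicalSpace A] [TopologicalSpace X] (a0 : A) (x0 : X) :
    Smash A X a0 x0 :=
  Quot.mk _ (a0, x0)

/-- The wedge `U ∨ V`. -/
def Wedge (U V : Type) [TopologicalSpace U] [TopologicalSpace V] (u0 : U) (v0 : V) : Type :=
  Quot (fun s t : U ⊕ V => (s = Sum.inl u0 ∨ s = Sum.inr v0) ∧ (t = Sum.inl u0 ∨ t = Sum.inr v0))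

instance (U V : Type) [TopologicalSpace U] [TopologicalSpace V] (u0 : U) (v0 : V) :
    TopologicalSpace (Wedge U V u0 v0) :=
  inferInstanceAs (TopologicalSpace (Quot _))

/-- The relation defining the pushout of `B ←f− A −g→ X`. -/
def PushoutRel {A B X : Type} (f : A → B) (g : A → X) (u v : B ⊕ X) : Prop :=
  ∃ a : A, u = Sum.inl (f a) ∧ v = Sum.inr (g a)

/-- The (strict) topological pushout of `B ←f− A −g→ X`. -/
def TopPushout {A B X : Type} [TopologicalSpace A] [TopologicalSpace B] [TopologicalSpace X]
    (f : C(A, B)) (g : C(A, X)) : Type :=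
  Quot (PushoutRel f g)

instance {A B X : Type} [TopologicalSpace A] [TopologicalSpace B] [TopologicalSpace X]
    (f : C(A, B)) (g : C(A, X)) : TopologicalSpace (TopPushout f g) :=
  inferInstanceAs (TopologicalSpace (Quot _))

/-! ### Simplicial complexes and polyhedral products -/

/-- An (abstract) simplicial complex on the vertex set `[m] = {0, …, m-1}`. -/
structure SimplicialComplexOn (m : ℕ) where
  faces : Set (Finset (Fin m))
  empty_mem : ∅ ∈ faces
  down_closed : ∀ {σ τ : Finset (Fin m)}, σ ∈ faces → τ ⊆ σ → τ ∈ faces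
  vertex_mem : ∀ i : Fin m, {i} ∈ faces

namespace SimplicialComplexOn

/-- `K` is the full simplex on its vertex set. -/
def IsSimplex {m : ℕ} (K : SimplicialComplexOn m) : Prop := K.faces = Set.univ

/-- A minimal non-face of `K`. -/
def IsMinNonFace {m : ℕ} (K : SimplicialComplexOn m) (M : Finset (Fin m)) : Prop :=
  2 ≤ M.card ∧ M ∉ K.faces ∧ ∀ τ : Finset (Fin m), τ ⊂ M → τ ∈ K.faces

/-- A flag complex: all minimal non-faces have cardinality two. -/
def IsFlag {m : ℕ} (K : SimplicialComplexOn m) : Prop :=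
  ∀ M : Finset (Fin m), K.IsMinNonFace M → M.card = 2

/-- The minimal non-faces are mutually disjoint. -/
def MinNonFacesDisjoint {m : ℕ} (K : SimplicialComplexOn m) : Prop :=
  ∀ M M' : Finset (Fin m), K.IsMinNonFace M → K.IsMinNonFace M' → M ≠ M' →
    Disjoint M M'

end SimplicialComplexOn

/-- The polyhedral product `Z_K(X, A)` of the family of pairs `(X i, A i)`, as a subset of
`∏ i, X i`. -/
def polyProd {m : ℕ} (K : SimplicialComplexOn m) (X : Fin m → Type)
    [∀ i, TopologicalSpace (X i)] (A : ∀ i, Set (X i)) : Set (∀ i, X i) :=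
  {z | ∃ σ ∈ K.faces, ∀ i, i ∉ σ → z i ∈ A i}

/-- The continuous inclusion of a subspace. -/
def inclCM {X : Type} [TopologicalSpace X] (A : Set X) : C(A, X) :=
  ⟨Subtype.val, continuous_subtype_val⟩

/-- The map of polyhedral products induced by a family of maps of pairs. -/
def polyProdMap {m : ℕ} (K : SimplicialComplexOn m) {X Y : Fin m → Type}
    [∀ i, TopologicalSpace (X i)] [∀ i, TopologicalSpace (Y i)]
    {A : ∀ i, Set (X i)} {B : ∀ i, Set (Y i)} (f : ∀ i, C(X i, Y i))
    (hf : ∀ i, Set.MapsTo (f i) (A i) (B i)) :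
    C(polyProd K X A, polyProd K Y B) :=
  have hmem : ∀ z : polyProd K X A, (fun i => f i (z.1 i)) ∈ polyProd K Y B := fun z => by
    obtain ⟨σ, hσ, hz⟩ := z.2
    exact ⟨σ, hσ, fun i hi => hf i (hz i hi)⟩
  ⟨fun z => ⟨fun i => f i (z.1 i), hmem z⟩,
    Continuous.subtype_mk (continuous_pi fun i =>
      (f i).continuous.comp ((continuous_apply i).comp continuous_subtype_val)) hmem⟩

/-- The inclusion of the polyhedral product into the ambient product. -/
def polyProdProj {m : ℕ} (K : SimplicialComplexOn m) (X : Fin m → Type)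
    [∀ i, TopologicalSpace (X i)] (A : ∀ i, Set (X i)) :
    C(polyProd K X A, ∀ i, X i) :=
  ⟨Subtype.val, continuous_subtype_val⟩

/-! ### Cofibrations -/

/-- A map is a cofibration when it has the homotopy extension property. -/
def IsCofibration {A X : Type} [TopologicalSpace A] [TopologicalSpace X] (j : C(A, X)) : Prop :=
  ∀ (Y : Type) (_ : TopologicalSpace Y) (g : C(X, Y)) (h : C(unitInterval × A, Y)),
    (∀ a, h (0, a) = g (j a)) →
    ∃ H : C(unitInterval × X, Y), (∀ x, H (0, x) = g x) ∧ ∀ t a, H (t, j a) = h (t, a)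

/-- `(X, A)` is an NDR-pair: the inclusion `A → X` is a cofibration. -/
def IsNDRPair {X : Type} [TopologicalSpace X] (A : Set X) : Prop :=
  IsCofibration (inclCM A)


/-! ### The evaluation map from the cone on a homotopy fibre -/

/-- The canonical evaluation map `C(hofib(A → X)) → X`, sending `((a, γ), t)` to `γ t`. -/
def coneFibEval {X : Type} [TopologicalSpace X] (A : Set X) (x0 : X) :
    C(TopCone (HFiber (inclCM A) x0), X) :=
  ⟨Quot.lift (fun w : HFiber (inclCM A) x0 × unitInterval => w.1.1.2 w.2)
      (fun w w' h => by
        show w.1.1.2 w.2 = w'.1.1.2 w'.2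
        rw [h.1, h.2, w.1.2.2, w'.1.2.2]),
    continuous_quot_lift _ (by
      have h1 : Continuous fun w : HFiber (inclCM A) x0 × unitInterval =>
          ((w.1.1.2, w.2) : C(unitInterval, X) × unitInterval) :=
        ((continuous_snd.comp (continuous_subtype_val.comp continuous_fst)).prodMk
          continuous_snd)
      exact ContinuousEval.continuous_eval.comp h1)⟩

theorem coneFibEval_mapsTo {X : Type} [TopologicalSpace X] (A : Set X) (x0 : X) :
    Set.MapsTo (coneFibEval A x0) (Set.range (coneIncl (HFiber (inclCM A) x0))) A := by
  rintro _ ⟨w, rfl⟩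
  show w.1.2 0 ∈ A
  rw [w.2.1]
  exact w.1.1.2

/-! ### Lusternik-Schnirelmann category and localizations -/

/-- `cat X ≤ n`: `X` is covered by `n + 1` open sets, each of which is contractible in `X`. -/
def LSCatLE (X : Type) [TopologicalSpace X] (n : ℕ) : Prop :=
  ∃ U : Fin (n + 1) → Set X, (∀ i, IsOpen (U i)) ∧ (⋃ i, U i) = Set.univ ∧
    ∀ i, ∃ x0 : X, (inclCM (U i)).Homotopic (ContinuousMap.const _ x0)

/-- `f : X → Y` is an `S`-localization (with coefficients `R`): `Y` is `S`-local and `f`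
induces an isomorphism on homology with coefficients in `R`. -/
def IsLocalizationOver (R : Type) [CommRing R] (S : ℕ → Prop) {X Y : Type}
    [TopologicalSpace X] [TopologicalSpace Y] (f : C(X, Y)) : Prop :=
  SLocalSpace S Y ∧ ∀ n : ℕ, Function.Bijective (SHmap R n f)

/-! ### The induced homomorphism on fundamental groups, and the plus construction -/

/-- The homomorphism induced by a continuous map on fundamental groups. -/
def pi1Hom {X Y : Type} [TopologicalSpace X] [TopologicalSpace Y] (f : C(X, Y)) (x : X) :
    FundamentalGroup X x →* FundamentalGroup Y (f x) :=
  CategoryTheory.Functor.mapEnd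
    (X := FundamentalGroupoid.mk x)
    (FundamentalGroupoid.fundamentalGroupoidFunctor.map
      (show TopCat.of X ⟶ TopCat.of Y from TopCat.ofHom f))

/-- `l : X → Y` is a Quillen plus construction with respect to the perfect normal subgroup
`P ≤ π₁(X, x)`: it kills exactly `P` on fundamental groups and its homotopy fibre is acyclic
(equivalently, it is a homology isomorphism for all local coefficient systems on `Y`). -/
def IsPlusConstructionWrt {X Y : Type} [TopologicalSpace X] [TopologicalSpace Y]
    (l : C(X, Y)) (x : X) (P : Subgroup (FundamentalGroup X x)) : Prop :=
  P.Normal ∧ ⁅P, P⁆ = P ∧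
  Function.Surjective (pi1Hom l x) ∧ (pi1Hom l x).ker = P ∧
  AcyclicSpace (HFiber l (l x))

/-! ### Graph products of groups -/

/-- The commutation relations defining a graph product. -/
def graphProdRels {m : ℕ} (Γ : SimpleGraph (Fin m)) (G : Fin m → Type)
    [∀ i, Group (G i)] : Set (Monoid.CoprodI G) :=
  {x | ∃ (i j : Fin m) (g : G i) (h : G j), Γ.Adj i j ∧
    x = Monoid.CoprodI.of g * Monoid.CoprodI.of h *
      (Monoid.CoprodI.of g)⁻¹ * (Monoid.CoprodI.of h)⁻¹}

/-- The graph product of the groups `G i` over the simple graph `Γ`. -/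
def GraphProduct {m : ℕ} (Γ : SimpleGraph (Fin m)) (G : Fin m → Type)
    [∀ i, Group (G i)] : Type :=
  Monoid.CoprodI G ⧸ Subgroup.normalClosure (graphProdRels Γ G)

instance {m : ℕ} (Γ : SimpleGraph (Fin m)) (G : Fin m → Type) [∀ i, Group (G i)] :
    Group (GraphProduct Γ G) :=
  inferInstanceAs (Group (Monoid.CoprodI G ⧸ Subgroup.normalClosure (graphProdRels Γ G)))

theorem graphProdRels_le_ker {m : ℕ} (Γ : SimpleGraph (Fin m)) (G : Fin m → Type)
    [∀ i, Group (G i)] :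
    Subgroup.normalClosure (graphProdRels Γ G) ≤
      (Monoid.CoprodI.lift fun i => MonoidHom.mulSingle G i).ker := by
  apply Subgroup.normalClosure_le_normal
  rintro x ⟨i, j, g, h, hadj, rfl⟩
  have hc : Commute (MonoidHom.mulSingle G i g) (MonoidHom.mulSingle G j h) :=
    Pi.mulSingle_commute hadj.ne g h
  simp only [SetLike.mem_coe, MonoidHom.mem_ker, map_mul, map_inv, Monoid.CoprodI.lift_of]
  rw [hc.eq]
  group

/-- The canonical homomorphism from the graph product to the direct product. -/
def GraphProduct.toPi {m : ℕ} (Γ : SimpleGraph (Fin m)) (G : Fin m → Type)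
    [∀ i, Group (G i)] : GraphProduct Γ G →* ∀ i, G i :=
  QuotientGroup.lift _ (Monoid.CoprodI.lift fun i => MonoidHom.mulSingle G i)
    (graphProdRels_le_ker Γ G)

/-- The graph product kernel `K_Γ(G)`: the kernel of the canonical homomorphism
`G^Γ → ∏ i, G i`. -/
def GraphProductKernel {m : ℕ} (Γ : SimpleGraph (Fin m)) (G : Fin m → Type)
    [∀ i, Group (G i)] : Subgroup (GraphProduct Γ G) :=
  (GraphProduct.toPi Γ G).ker

/-- The flag complex of a simple graph. -/
def flagComplex {m : ℕ} (Γ : SimpleGraph (Fin m)) : SimplicialComplexOn m where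
  faces := {σ | ∀ i ∈ σ, ∀ j ∈ σ, i ≠ j → Γ.Adj i j}
  empty_mem := by simp
  down_closed := fun hσ hτ i hi j hj hij => hσ i (hτ hi) j (hτ hj) hij
  vertex_mem := by
    intro i j hj k hk hjk
    simp only [Finset.mem_singleton] at hj hk
    exact absurd (hj.trans hk.symm) hjk


/-- A rational sphere `S^n_{(0)}` (`n ≥ 2`): a simply connected rational space whose reduced
integral homology is a single `ℚ` in degree `n`. -/
def IsRationalSphere (Y : Type) [TopologicalSpace Y] (n : ℕ) : Prop :=
  SimplyConnectedSpace Y ∧ SLocalSpace ratInv Y ∧ 2 ≤ n ∧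
    Nonempty ((SH ℤ n Y) ≃+ ℚ) ∧ ∀ k : ℕ, 1 ≤ k → k ≠ n → Subsingleton (SH ℤ k Y)

end

noncomputable section Aux

open ContinuousMap

namespace ProdAux

variable {A B : Type} [TopologicalSpace A] [TopologicalSpace B]

/-- Pairing of generalized loops. -/
def genLoopPair {N : Type} {a : A} {b : B} (p : GenLoop N A a) (q : GenLoop N B b) :
    GenLoop N (A × B) (a, b) :=
  ⟨p.1.prodMk q.1, fun t ht => Prod.ext (p.2 t ht) (q.2 t ht)⟩

theorem genLoopPair_homotopic {N : Type} {a : A} {b : B} {p p' : GenLoop N A a}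
    {q q' : GenLoop N B b} (h1 : GenLoop.Homotopic p p') (h2 : GenLoop.Homotopic q q') :
    GenLoop.Homotopic (genLoopPair p q) (genLoopPair p' q') := by
  obtain ⟨H1⟩ := h1; obtain ⟨H2⟩ := h2
  exact ⟨H1.prod H2⟩

/-- The homotopy groups of a product. -/
def piProdEquiv {N : Type} {a : A} {b : B} :
    HomotopyGroup N (A × B) (a, b) ≃ HomotopyGroup N A a × HomotopyGroup N B b where
  toFun g := (piMap ContinuousMap.fst N (a, b) g, piMap ContinuousMap.snd N (a, b) g)
  invFun gh := Quotient.map₂ genLoopPair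
    (fun _ _ hp _ _ hq => genLoopPair_homotopic hp hq) gh.1 gh.2
  left_inv g := by
    induction g using Quotient.inductionOn with
    | h p =>
      show (⟦genLoopPair (GenLoop.push ContinuousMap.fst p)
        (GenLoop.push ContinuousMap.snd p)⟧ : HomotopyGroup N (A × B) (a, b)) = ⟦p⟧
      exact congrArg (Quotient.mk _) (Subtype.ext (ContinuousMap.ext fun t => rfl))
  right_inv gh := by
    obtain ⟨g, h⟩ := gh
    induction g, h using Quotient.inductionOn₂ with
    | h p q =>
      show ((⟦GenLoop.push ContinuousMap.fst (genLoopPair p q)⟧,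
        ⟦GenLoop.push ContinuousMap.snd (genLoopPair p q)⟧) :
          HomotopyGroup N A a × HomotopyGroup N B b) = (⟦p⟧, ⟦q⟧)
      refine Prod.ext_iff.mpr ⟨?_, ?_⟩
      · show (⟦GenLoop.push ContinuousMap.fst (genLoopPair p q)⟧ : HomotopyGroup N A a) = ⟦p⟧
        exact congrArg (Quotient.mk _) (Subtype.ext (ContinuousMap.ext fun t => rfl))
      · show (⟦GenLoop.push ContinuousMap.snd (genLoopPair p q)⟧ : HomotopyGroup N B b) = ⟦q⟧
        exact congrArg (Quotient.mk _) (Subtype.ext (ContinuousMap.ext fun t => rfl))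

theorem push_transAt {X Y : Type} [TopologicalSpace X] [TopologicalSpace Y] (f : C(X, Y))
    {N : Type} [DecidableEq N] {x : X} (i : N) (p q : GenLoop N X x) :
    GenLoop.push f (GenLoop.transAt i p q) =
      GenLoop.transAt i (GenLoop.push f p) (GenLoop.push f q) := by
  refine Subtype.ext (ContinuousMap.ext fun t => ?_)
  show f (GenLoop.transAt i p q t) = GenLoop.transAt i (GenLoop.push f p) (GenLoop.push f q) t
  simp only [GenLoop.transAt, GenLoop.coe_copy, apply_ite f]
  split_ifs <;> rfl

theorem mk_mul {X : Type} [TopologicalSpace X] {N : Type} [DecidableEq N] [Nonempty N] {x : X}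
    (i : N) (p q : GenLoop N X x) :
    ((· * ·) : HomotopyGroup N X x → HomotopyGroup N X x → HomotopyGroup N X x) ⟦p⟧ ⟦q⟧ =
      ⟦GenLoop.transAt i q p⟧ :=
  HomotopyGroup.mul_spec

theorem piMap_mul {X Y : Type} [TopologicalSpace X] [TopologicalSpace Y] (f : C(X, Y))
    {n : ℕ} {x : X} (g h : HomotopyGroup (Fin (n + 1)) X x) :
    piMap f (Fin (n + 1)) x (g * h) =
      piMap f (Fin (n + 1)) x g * piMap f (Fin (n + 1)) x h := by
  induction g, h using Quotient.inductionOn₂ with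
  | h p q =>
    refine Eq.trans (congrArg (piMap f (Fin (n + 1)) x) (mk_mul 0 p q)) ?_
    show (⟦GenLoop.push f (GenLoop.transAt 0 q p)⟧ : HomotopyGroup (Fin (n + 1)) Y (f x)) =
      piMap f (Fin (n + 1)) x ⟦p⟧ * piMap f (Fin (n + 1)) x ⟦q⟧
    rw [push_transAt]
    exact (mk_mul 0 (GenLoop.push f p) (GenLoop.push f q)).symm

/-- The homotopy groups of a product, as a `MulEquiv`. -/
def piProdMulEquiv {n : ℕ} {a : A} {b : B} :
    HomotopyGroup (Fin (n + 1)) (A × B) (a, b) ≃*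
      HomotopyGroup (Fin (n + 1)) A a × HomotopyGroup (Fin (n + 1)) B b :=
  { piProdEquiv with
    map_mul' := fun g h => Prod.ext_iff.mpr ⟨piMap_mul _ g h, piMap_mul _ g h⟩ }

theorem subsingleton_pi_prod {N : Type} {a : A} {b : B}
    (h1 : Subsingleton (HomotopyGroup N A a)) (h2 : Subsingleton (HomotopyGroup N B b)) :
    Subsingleton (HomotopyGroup N (A × B) (a, b)) := by
  haveI := h1; haveI := h2
  exact piProdEquiv.subsingleton

theorem piMap_comp {X Y Z : Type} [TopologicalSpace X] [TopologicalSpace Y] [TopologicalSpace Z]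
    (g : C(Y, Z)) (f : C(X, Y)) (N : Type) (x : X) (z : HomotopyGroup N X x) :
    piMap (g.comp f) N x z = piMap g N (f x) (piMap f N x z) := by
  induction z using Quotient.inductionOn with
  | h p => exact congrArg (Quotient.mk _) (Subtype.ext (ContinuousMap.ext fun t => rfl))

theorem piProdEquiv_natural {A' B' : Type} [TopologicalSpace A'] [TopologicalSpace B']
    (f : C(A, A')) (g : C(B, B')) {N : Type} (x : A × B)
    (z : HomotopyGroup N (A × B) x) :
    piProdEquiv (piMap (f.prodMap g) N x z) =
      Prod.map (piMap f N x.1) (piMap g N x.2) (piProdEquiv z) := by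
  induction z using Quotient.inductionOn with
  | h p =>
    refine Prod.ext_iff.mpr ⟨?_, ?_⟩
    · exact congrArg (Quotient.mk _) (Subtype.ext (ContinuousMap.ext fun t => rfl))
    · exact congrArg (Quotient.mk _) (Subtype.ext (ContinuousMap.ext fun t => rfl))

theorem isWeakHomotopyEquiv_prodMap {A' B' : Type} [TopologicalSpace A'] [TopologicalSpace B']
    {f : C(A, A')} {g : C(B, B')} (hf : IsWeakHomotopyEquiv f) (hg : IsWeakHomotopyEquiv g) :
    IsWeakHomotopyEquiv (f.prodMap g) := by
  constructor
  · rintro ⟨a', b'⟩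
    obtain ⟨a⟩ := hf.1 ⟨a'⟩
    obtain ⟨b⟩ := hg.1 ⟨b'⟩
    exact ⟨(a, b)⟩
  · intro x n
    have heq : (piMap (f.prodMap g) (Fin n) x) =
        (piProdEquiv (N := Fin n) (a := f x.1) (b := g x.2)).symm ∘
          (Prod.map (piMap f (Fin n) x.1) (piMap g (Fin n) x.2)) ∘
          (piProdEquiv (N := Fin n) (a := x.1) (b := x.2)) := by
      funext z
      show piMap (f.prodMap g) (Fin n) x z = _
      rw [Function.comp_apply, Function.comp_apply, ← piProdEquiv_natural f g x z]
      exact (Equiv.symm_apply_apply _ _).symm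
    rw [heq]
    exact (Equiv.bijective _).comp
      (((hf.2 x.1 n).prodMap (hg.2 x.2 n)).comp (Equiv.bijective _))

theorem sLocalSpace_prod {S : ℕ → Prop} (hA : SLocalSpace S A) (hB : SLocalSpace S B) :
    SLocalSpace S (A × B) := by
  intro x n k hk
  set e := piProdMulEquiv (n := n) (a := x.1) (b := x.2) with he
  have hpow : (fun w : HomotopyGroup (Fin (n + 1)) (A × B) (x.1, x.2) => w ^ k) =
      e.symm ∘ (Prod.map (fun w => w ^ k) (fun w => w ^ k)) ∘ e := by
    funext w
    have : Prod.map (fun w : HomotopyGroup (Fin (n + 1)) A x.1 => w ^ k)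
        (fun w : HomotopyGroup (Fin (n + 1)) B x.2 => w ^ k) (e w) = (e w) ^ k := by
      refine Prod.ext_iff.mpr ⟨?_, ?_⟩ <;> simp [Prod.pow_fst, Prod.pow_snd]
    simp only [Function.comp_apply, this, ← map_pow, MulEquiv.symm_apply_apply]
  exact hpow ▸ (e.symm.bijective.comp
    (((hA x.1 n k hk).prodMap (hB x.2 n k hk)).comp e.bijective))

/-- `Multiplicative` of a product. -/
def multProdEquiv {M N : Type} [AddMonoid M] [AddMonoid N] :
    Multiplicative M × Multiplicative N ≃* Multiplicative (M × N) where
  toFun p := Multiplicative.ofAdd (p.1.toAdd, p.2.toAdd)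
  invFun x := (Multiplicative.ofAdd x.toAdd.1, Multiplicative.ofAdd x.toAdd.2)
  left_inv _ := rfl
  right_inv _ := rfl
  map_mul' _ _ := rfl

theorem isFGMulOver_of_mulEquiv {R : Type} [CommRing R] {G H : Type} [Group G] [Group H]
    (e : G ≃* H) (h : IsFGMulOver R H) : IsFGMulOver R G := by
  obtain ⟨N, i, m, fin, ⟨e'⟩⟩ := h
  exact ⟨N, i, m, fin, ⟨e.trans e'⟩⟩

theorem isFGMulOver_prod {R : Type} [CommRing R] {G H : Type} [Group G] [Group H]
    (hG : IsFGMulOver R G) (hH : IsFGMulOver R H) : IsFGMulOver R (G × H) := by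
  obtain ⟨N₁, i₁, m₁, fin₁, ⟨e₁⟩⟩ := hG
  obtain ⟨N₂, i₂, m₂, fin₂, ⟨e₂⟩⟩ := hH
  letI := i₁; letI := m₁; letI := fin₁; letI := i₂; letI := m₂; letI := fin₂
  exact ⟨N₁ × N₂, inferInstance, inferInstance, inferInstance,
    ⟨(e₁.prodCongr e₂).trans multProdEquiv⟩⟩

theorem piFiniteOver_prod {R : Type} [CommRing R] (hA : PiFiniteOver R A)
    (hB : PiFiniteOver R B) : PiFiniteOver R (A × B) := fun x n =>
  isFGMulOver_of_mulEquiv (piProdMulEquiv (n := n) (a := x.1) (b := x.2))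
    (isFGMulOver_prod (hA x.1 n) (hB x.2 n))

/-- Homeomorphism between a product of pi types and a pi type over a sum. -/
def homeoSumPi {ι ι' : Type} (Y : ι ⊕ ι' → Type) [∀ s, TopologicalSpace (Y s)] :
    ((∀ i, Y (Sum.inl i)) × (∀ j, Y (Sum.inr j))) ≃ₜ (∀ s, Y s) where
  toEquiv := (Equiv.sumPiEquivProdPi Y).symm
  continuous_toFun := continuous_pi fun s => by
    cases s with
    | inl i => exact (continuous_apply i).comp continuous_fst
    | inr j => exact (continuous_apply j).comp continuous_snd
  continuous_invFun :=
    (continuous_pi fun i => continuous_apply _).prodMk (continuous_pi fun j => continuous_apply _)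

theorem isGEM_prod {K L : Type} [TopologicalSpace K] [TopologicalSpace L]
    (hK : IsGEM K) (hL : IsGEM L) : IsGEM (K × L) := by
  obtain ⟨ι, Y, tY, n, hEM, ⟨e⟩⟩ := hK
  obtain ⟨ι', Y', tY', n', hEM', ⟨e'⟩⟩ := hL
  letI := tY; letI := tY'
  letI tS : ∀ s : ι ⊕ ι', TopologicalSpace (Sum.elim Y Y' s) :=
    fun s => Sum.rec (fun i => tY i) (fun j => tY' j) s
  refine ⟨ι ⊕ ι', Sum.elim Y Y', tS, Sum.elim n n', fun s => ?_, ?_⟩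
  · cases s with
    | inl i => exact hEM i
    | inr j => exact hEM' j
  · exact ⟨(e.prodCongr e').trans (homeoSumPi (Sum.elim Y Y')).toHomotopyEquiv⟩

theorem homotopic_prodMap {A' B' : Type} [TopologicalSpace A'] [TopologicalSpace B']
    {f₀ f₁ : C(A, A')} {g₀ g₁ : C(B, B')} (h : f₀.Homotopic f₁) (h' : g₀.Homotopic g₁) :
    (f₀.prodMap g₀).Homotopic (f₁.prodMap g₁) :=
  h.map2 ContinuousMap.Homotopy.prodMap h'

theorem prodMap_comp_prodMap {X₁ Y₁ Z₁ X₂ Y₂ Z₂ : Type} [TopologicalSpace X₁]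
    [TopologicalSpace Y₁] [TopologicalSpace Z₁] [TopologicalSpace X₂] [TopologicalSpace Y₂]
    [TopologicalSpace Z₂] (f₁ : C(X₁, Y₁)) (g₁ : C(Y₁, Z₁)) (f₂ : C(X₂, Y₂)) (g₂ : C(Y₂, Z₂)) :
    (g₁.prodMap g₂).comp (f₁.prodMap f₂) = (g₁.comp f₁).prodMap (g₂.comp f₂) :=
  ContinuousMap.ext fun z => rfl

theorem prodMap_id_id :
    (ContinuousMap.id A).prodMap (ContinuousMap.id B) = ContinuousMap.id (A × B) :=
  ContinuousMap.ext fun z => rfl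

theorem homotopyRetract_prod {X Y X' Y' : Type} [TopologicalSpace X] [TopologicalSpace Y]
    [TopologicalSpace X'] [TopologicalSpace Y'] (h : HomotopyRetract X X')
    (h' : HomotopyRetract Y Y') : HomotopyRetract (X × Y) (X' × Y') := by
  obtain ⟨i, r, hir⟩ := h
  obtain ⟨i', r', hir'⟩ := h'
  refine ⟨i.prodMap i', r.prodMap r', ?_⟩
  rw [prodMap_comp_prodMap, ← prodMap_id_id]
  exact homotopic_prodMap hir hir'

theorem isHEquivMap_prodMap {X Y X' Y' : Type} [TopologicalSpace X] [TopologicalSpace Y]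
    [TopologicalSpace X'] [TopologicalSpace Y'] {f : C(X, X')} {g : C(Y, Y')}
    (hf : IsHEquivMap f) (hg : IsHEquivMap g) : IsHEquivMap (f.prodMap g) := by
  obtain ⟨f', hf1, hf2⟩ := hf
  obtain ⟨g', hg1, hg2⟩ := hg
  refine ⟨f'.prodMap g', ?_, ?_⟩
  · rw [prodMap_comp_prodMap, ← prodMap_id_id]; exact homotopic_prodMap hf1 hg1
  · rw [prodMap_comp_prodMap, ← prodMap_id_id]; exact homotopic_prodMap hf2 hg2

theorem isHEquivMap_comp {X Y Z : Type} [TopologicalSpace X] [TopologicalSpace Y]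
    [TopologicalSpace Z] {g : C(Y, Z)} {f : C(X, Y)} (hg : IsHEquivMap g)
    (hf : IsHEquivMap f) : IsHEquivMap (g.comp f) := by
  obtain ⟨g', hg1, hg2⟩ := hg
  obtain ⟨f', hf1, hf2⟩ := hf
  refine ⟨f'.comp g', ?_, ?_⟩
  · have e1 : (f'.comp g').comp (g.comp f) = f'.comp ((g'.comp g).comp f) :=
      ContinuousMap.ext fun _ => rfl
    rw [e1]
    refine ContinuousMap.Homotopic.trans ?_ hf1
    have h2 := (ContinuousMap.Homotopic.refl f').comp
      (hg1.comp (ContinuousMap.Homotopic.refl f))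
    rwa [ContinuousMap.id_comp] at h2
  · have e1 : (g.comp f).comp (f'.comp g') = g.comp ((f.comp f').comp g') :=
      ContinuousMap.ext fun _ => rfl
    rw [e1]
    refine ContinuousMap.Homotopic.trans ?_ hg2
    have h2 := (ContinuousMap.Homotopic.refl g).comp
      (hf2.comp (ContinuousMap.Homotopic.refl g'))
    rwa [ContinuousMap.id_comp] at h2

theorem isHEquivMap_of_homeo {X Y : Type} [TopologicalSpace X] [TopologicalSpace Y]
    (e : X ≃ₜ Y) : IsHEquivMap (e : C(X, Y)) := by
  refine ⟨(e.symm : C(Y, X)), ?_, ?_⟩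
  · rw [show (e.symm : C(Y, X)).comp (e : C(X, Y)) = ContinuousMap.id X from
      ContinuousMap.ext fun x => e.symm_apply_apply x]
  · rw [show (e : C(X, Y)).comp (e.symm : C(Y, X)) = ContinuousMap.id Y from
      ContinuousMap.ext fun y => e.apply_symm_apply y]

/-- The homotopy fibre of a product map. -/
def hfiberProdHomeo {E₁ B₁ E₂ B₂ : Type} [TopologicalSpace E₁] [TopologicalSpace B₁]
    [TopologicalSpace E₂] [TopologicalSpace B₂] (p₁ : C(E₁, B₁)) (p₂ : C(E₂, B₂))
    (b₁ : B₁) (b₂ : B₂) :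
    HFiber (p₁.prodMap p₂) (b₁, b₂) ≃ₜ HFiber p₁ b₁ × HFiber p₂ b₂ where
  toFun w := (⟨(w.1.1.1, ContinuousMap.fst.comp w.1.2),
      congrArg Prod.fst w.2.1, congrArg Prod.fst w.2.2⟩,
    ⟨(w.1.1.2, ContinuousMap.snd.comp w.1.2),
      congrArg Prod.snd w.2.1, congrArg Prod.snd w.2.2⟩)
  invFun z := ⟨((z.1.1.1, z.2.1.1), z.1.1.2.prodMk z.2.1.2),
    Prod.ext_iff.mpr ⟨z.1.2.1, z.2.2.1⟩, Prod.ext_iff.mpr ⟨z.1.2.2, z.2.2.2⟩⟩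
  left_inv w := Subtype.ext (Prod.ext_iff.mpr ⟨rfl, ContinuousMap.ext fun t => rfl⟩)
  right_inv z := Prod.ext_iff.mpr
    ⟨Subtype.ext (Prod.ext_iff.mpr ⟨rfl, ContinuousMap.ext fun t => rfl⟩),
     Subtype.ext (Prod.ext_iff.mpr ⟨rfl, ContinuousMap.ext fun t => rfl⟩)⟩
  continuous_toFun := by
    apply Continuous.prodMk
    · exact Continuous.subtype_mk
        ((continuous_fst.comp (continuous_fst.comp continuous_subtype_val)).prodMk
          ((ContinuousMap.continuous_postcomp _).comp
            (continuous_snd.comp continuous_subtype_val))) _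
    · exact Continuous.subtype_mk
        ((continuous_snd.comp (continuous_fst.comp continuous_subtype_val)).prodMk
          ((ContinuousMap.continuous_postcomp _).comp
            (continuous_snd.comp continuous_subtype_val))) _
  continuous_invFun := by
    apply Continuous.subtype_mk
    apply Continuous.prodMk
    · exact (continuous_fst.comp (continuous_subtype_val.comp continuous_fst)).prodMk
        (continuous_fst.comp (continuous_subtype_val.comp continuous_snd))
    · apply ContinuousMap.continuous_of_continuous_uncurry
      apply Continuous.prodMk
      · exact ContinuousEval.continuous_eval.comp
          ((continuous_snd.comp (continuous_subtype_val.comp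
            (continuous_fst.comp continuous_fst))).prodMk continuous_snd)
      · exact ContinuousEval.continuous_eval.comp
          ((continuous_snd.comp (continuous_subtype_val.comp
            (continuous_snd.comp continuous_fst))).prodMk continuous_snd)

/-- The product of two null-homotopies. -/
def prodNullHomotopy {F₁ E₁ B₁ F₂ E₂ B₂ : Type} [TopologicalSpace F₁] [TopologicalSpace E₁]
    [TopologicalSpace B₁] [TopologicalSpace F₂] [TopologicalSpace E₂] [TopologicalSpace B₂]
    {i₁ : C(F₁, E₁)} {p₁ : C(E₁, B₁)} {i₂ : C(F₂, E₂)} {p₂ : C(E₂, B₂)} {b₁ : B₁} {b₂ : B₂}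
    (H₁ : ContinuousMap.Homotopy (p₁.comp i₁) (ContinuousMap.const F₁ b₁))
    (H₂ : ContinuousMap.Homotopy (p₂.comp i₂) (ContinuousMap.const F₂ b₂)) :
    ContinuousMap.Homotopy ((p₁.prodMap p₂).comp (i₁.prodMap i₂))
      (ContinuousMap.const (F₁ × F₂) (b₁, b₂)) where
  toFun z := (H₁ (z.1, z.2.1), H₂ (z.1, z.2.2))
  continuous_toFun := by
    apply Continuous.prodMk
    · exact H₁.continuous.comp (continuous_fst.prodMk (continuous_fst.comp continuous_snd))
    · exact H₂.continuous.comp (continuous_fst.prodMk (continuous_snd.comp continuous_snd))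
  map_zero_left z := Prod.ext_iff.mpr ⟨H₁.apply_zero z.1, H₂.apply_zero z.2⟩
  map_one_left z := Prod.ext_iff.mpr ⟨H₁.apply_one z.1, H₂.apply_one z.2⟩

theorem isHomotopyFibration_prodMap {F₁ E₁ B₁ F₂ E₂ B₂ : Type} [TopologicalSpace F₁]
    [TopologicalSpace E₁] [TopologicalSpace B₁] [TopologicalSpace F₂] [TopologicalSpace E₂]
    [TopologicalSpace B₂] {i₁ : C(F₁, E₁)} {p₁ : C(E₁, B₁)} {i₂ : C(F₂, E₂)} {p₂ : C(E₂, B₂)}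
    (h₁ : IsHomotopyFibration i₁ p₁) (h₂ : IsHomotopyFibration i₂ p₂) :
    IsHomotopyFibration (i₁.prodMap i₂) (p₁.prodMap p₂) := by
  obtain ⟨b₁, H₁, hH₁⟩ := h₁
  obtain ⟨b₂, H₂, hH₂⟩ := h₂
  refine ⟨(b₁, b₂), prodNullHomotopy H₁ H₂, ?_⟩
  have key : hfibCompare (i₁.prodMap i₂) (p₁.prodMap p₂) (b₁, b₂) (prodNullHomotopy H₁ H₂) =
      ((hfiberProdHomeo p₁ p₂ b₁ b₂).symm : C(_, _)).comp
        ((hfibCompare i₁ p₁ b₁ H₁).prodMap (hfibCompare i₂ p₂ b₂ H₂)) := by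
    refine ContinuousMap.ext fun z => Subtype.ext ?_
    exact Prod.ext_iff.mpr ⟨rfl, ContinuousMap.ext fun t => rfl⟩
  rw [key]
  exact isHEquivMap_comp (isHEquivMap_of_homeo _) (isHEquivMap_prodMap hH₁ hH₂)

theorem subsingleton_pi_of_subsingleton {X : Type} [TopologicalSpace X] [Subsingleton X]
    {N : Type} (x : X) : Subsingleton (HomotopyGroup N X x) :=
  ⟨fun u v => Quotient.inductionOn₂ u v fun p q =>
    congrArg (Quotient.mk _) (Subtype.ext (ContinuousMap.ext fun _ => Subsingleton.elim _ _))⟩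

theorem bijective_pow_of_subsingleton {G : Type} [Group G] [Subsingleton G] (k : ℕ) :
    Function.Bijective (fun g : G => g ^ k) :=
  ⟨fun a b _ => Subsingleton.elim a b, fun g => ⟨g, Subsingleton.elim _ _⟩⟩

theorem isFGMulOver_of_subsingleton {R : Type} [CommRing R] {G : Type} [Group G]
    [Subsingleton G] : IsFGMulOver R G :=
  ⟨PUnit, inferInstance, inferInstance, inferInstance,
    ⟨{ toFun := fun _ => 1, invFun := fun _ => 1, left_inv := fun _ => Subsingleton.elim _ _,
       right_inv := fun _ => Subsingleton.elim _ _, map_mul' := fun _ _ => rfl }⟩⟩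

theorem isGEM_punit : IsGEM PUnit := by
  letI tE : ∀ i : Empty, TopologicalSpace (Empty.elim i) := fun i => i.elim
  refine ⟨Empty, Empty.elim, tE, fun i => i.elim, fun i => i.elim, ?_⟩
  have h1 : ∀ z : ∀ i : Empty, Empty.elim i, z = fun i => i.elim := fun z => funext fun i => i.elim
  refine ⟨{ toFun := ContinuousMap.const _ (fun i => i.elim),
            invFun := ContinuousMap.const _ PUnit.unit,
            left_inv := ?_, right_inv := ?_ }⟩
  · rw [show (ContinuousMap.const (∀ i : Empty, i.elim) PUnit.unit).comp
      (ContinuousMap.const PUnit (fun i => i.elim)) = ContinuousMap.id PUnit from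
      ContinuousMap.ext fun _ => rfl]
  · rw [show (ContinuousMap.const PUnit (fun i : Empty => i.elim)).comp
      (ContinuousMap.const (∀ i : Empty, i.elim) PUnit.unit) = ContinuousMap.id _ from
      ContinuousMap.ext fun z => (h1 z).symm]

instance subsingletonCM {X Y : Type} [TopologicalSpace X] [TopologicalSpace Y]
    [Subsingleton Y] : Subsingleton C(X, Y) :=
  ⟨fun f g => ContinuousMap.ext fun x => Subsingleton.elim _ _⟩

theorem gptStep_id (R : Type) [CommRing R] (S : ℕ → Prop) (ft : Bool) (c : ℕ)
    {Z : Type} [TopologicalSpace Z] : GPTStep R S ft c (ContinuousMap.id Z) := by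
  refine ⟨PUnit, inferInstance, ContinuousMap.const Z PUnit.unit, isGEM_punit,
    fun y j _ => subsingleton_pi_of_subsingleton y,
    fun x n k _ => ?_, fun _ x n => ?_, ?_⟩
  · haveI := subsingleton_pi_of_subsingleton (N := Fin (n + 1)) x
    exact bijective_pow_of_subsingleton k
  · haveI := subsingleton_pi_of_subsingleton (N := Fin (n + 1)) x
    exact isFGMulOver_of_subsingleton
  refine ⟨PUnit.unit,
    { toFun := fun _ => PUnit.unit, continuous_toFun := continuous_const,
      map_zero_left := fun _ => rfl, map_one_left := fun _ => rfl }, ?_⟩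
  refine ⟨HFiber.proj _ _, ?_, ?_⟩
  · rw [show (HFiber.proj (ContinuousMap.const Z PUnit.unit) PUnit.unit).comp
      (hfibCompare (ContinuousMap.id Z) (ContinuousMap.const Z PUnit.unit) PUnit.unit
        { toFun := fun _ => PUnit.unit, continuous_toFun := continuous_const,
          map_zero_left := fun _ => rfl, map_one_left := fun _ => rfl }) =
      ContinuousMap.id Z from ContinuousMap.ext fun z => rfl]
  · rw [show (hfibCompare (ContinuousMap.id Z) (ContinuousMap.const Z PUnit.unit) PUnit.unit
      { toFun := fun _ => PUnit.unit, continuous_toFun := continuous_const,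
        map_zero_left := fun _ => rfl, map_one_left := fun _ => rfl }).comp
      (HFiber.proj _ _) = ContinuousMap.id _ from ContinuousMap.ext fun w =>
      Subtype.ext (Prod.ext_iff.mpr ⟨rfl, Subsingleton.elim _ _⟩)]

theorem weaklyContractible_prod (hA : WeaklyContractible A) (hB : WeaklyContractible B) :
    WeaklyContractible (A × B) :=
  ⟨⟨(hA.1.some, hB.1.some)⟩, fun x n => subsingleton_pi_prod (hA.2 x.1 n) (hB.2 x.2 n)⟩

theorem gptStep_prod {R : Type} [CommRing R] {S : ℕ → Prop} {ft : Bool} {c : ℕ}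
    {Z₁' Z₁ Z₂' Z₂ : Type} [TopologicalSpace Z₁'] [TopologicalSpace Z₁] [TopologicalSpace Z₂']
    [TopologicalSpace Z₂] {q₁ : C(Z₁', Z₁)} {q₂ : C(Z₂', Z₂)}
    (h₁ : GPTStep R S ft c q₁) (h₂ : GPTStep R S ft c q₂) :
    GPTStep R S ft c (q₁.prodMap q₂) := by
  obtain ⟨K₁, tK₁, k₁, hGEM₁, hconn₁, hloc₁, hft₁, hfib₁⟩ := h₁
  obtain ⟨K₂, tK₂, k₂, hGEM₂, hconn₂, hloc₂, hft₂, hfib₂⟩ := h₂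
  letI := tK₁; letI := tK₂
  exact ⟨K₁ × K₂, inferInstance, k₁.prodMap k₂, isGEM_prod hGEM₁ hGEM₂,
    fun y j hj => subsingleton_pi_prod (hconn₁ y.1 j hj) (hconn₂ y.2 j hj),
    sLocalSpace_prod hloc₁ hloc₂, fun hft => piFiniteOver_prod (hft₁ hft) (hft₂ hft),
    isHomotopyFibration_prodMap hfib₁ hfib₂⟩

/-- Transport of a continuous map along equalities of indices in a tower. -/
def castCM {Z : ℕ → Type} [∀ n, TopologicalSpace (Z n)] {a b a' b' : ℕ}
    (h1 : a = a') (h2 : b = b') (q : C(Z a, Z b)) : C(Z a', Z b') :=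
  h1 ▸ h2 ▸ q

theorem gptStep_cast {R : Type} [CommRing R] {S : ℕ → Prop} {ft : Bool} {c : ℕ}
    {Z : ℕ → Type} [∀ n, TopologicalSpace (Z n)] {a b a' b' : ℕ}
    (h1 : a = a') (h2 : b = b') (q : C(Z a, Z b)) (hq : GPTStep R S ft c q) :
    GPTStep R S ft c (castCM h1 h2 q) := by
  subst h1; subst h2; exact hq

theorem hasGPT_mono {R : Type} [CommRing R] {S : ℕ → Prop} {ft : Bool} {c : ℕ}
    {X : Type} [TopologicalSpace X] {l l' : ℕ} (h : HasGPT R S ft c X l) (hl : l ≤ l') :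
    HasGPT R S ft c X l' := by
  obtain ⟨Z, tZ, q, h0, hstep, f, hf⟩ := h
  letI := tZ
  refine ⟨fun n => Z (min n l), fun n => inferInstance, fun n =>
    if h : n < l then
      castCM (show n + 1 = min (n + 1) l by omega) (show n = min n l by omega) (q n)
    else
      castCM (show l = min (n + 1) l by omega) (show l = min n l by omega)
        (ContinuousMap.id (Z l)), ?_, ?_, ?_⟩
  · show WeaklyContractible (Z (min 0 l))
    rw [show min 0 l = 0 by omega]
    exact h0
  · intro n _
    by_cases h : n < l
    · show GPTStep R S ft c (dite _ _ _)
      rw [dif_pos h]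
      exact gptStep_cast _ _ _ (hstep n h)
    · show GPTStep R S ft c (dite _ _ _)
      rw [dif_neg h]
      exact gptStep_cast _ _ _ (gptStep_id _ _ _ _)
  · show ∃ g : C(X, Z (min l' l)), IsWeakHomotopyEquiv g
    rw [show min l' l = l by omega]
    exact ⟨f, hf⟩

theorem hasGPT_prod {R : Type} [CommRing R] {S : ℕ → Prop} {ft : Bool} {c : ℕ} {l : ℕ}
    (hA : HasGPT R S ft c A l) (hB : HasGPT R S ft c B l) : HasGPT R S ft c (A × B) l := by
  obtain ⟨Z₁, t₁, q₁, h0₁, hstep₁, f₁, hf₁⟩ := hA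
  obtain ⟨Z₂, t₂, q₂, h0₂, hstep₂, f₂, hf₂⟩ := hB
  letI := t₁; letI := t₂
  exact ⟨fun n => Z₁ n × Z₂ n, fun n => inferInstance, fun n => (q₁ n).prodMap (q₂ n),
    weaklyContractible_prod h0₁ h0₂, fun n hn => gptStep_prod (hstep₁ n hn) (hstep₂ n hn),
    f₁.prodMap f₂, isWeakHomotopyEquiv_prodMap hf₁ hf₂⟩

/-- The product of two trivializations. -/
def trivializationProdMap {E₁ B₁ E₂ B₂ F₁ F₂ : Type} [TopologicalSpace E₁] [TopologicalSpace B₁]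
    [TopologicalSpace E₂] [TopologicalSpace B₂] [TopologicalSpace F₁] [TopologicalSpace F₂]
    {f₁ : E₁ → B₁} {f₂ : E₂ → B₂} (t₁ : Bundle.Trivialization F₁ f₁) (t₂ : Bundle.Trivialization F₂ f₂) :
    Bundle.Trivialization (F₁ × F₂) (Prod.map f₁ f₂) where
  toOpenPartialHomeomorph := (t₁.toOpenPartialHomeomorph.prod t₂.toOpenPartialHomeomorph).transHomeomorph
    (Homeomorph.prodProdProdComm B₁ F₁ B₂ F₂)
  baseSet := t₁.baseSet ×ˢ t₂.baseSet
  open_baseSet := t₁.open_baseSet.prod t₂.open_baseSet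
  source_eq := by
    show (t₁.toOpenPartialHomeomorph.prod t₂.toOpenPartialHomeomorph).source = _
    rw [OpenPartialHomeomorph.prod_source, t₁.source_eq, t₂.source_eq]
    exact (Set.preimage_prod_map_prod f₁ f₂ _ _).symm
  target_eq := by
    show (Homeomorph.prodProdProdComm B₁ F₁ B₂ F₂).symm ⁻¹'
      (t₁.toOpenPartialHomeomorph.prod t₂.toOpenPartialHomeomorph).target = _
    rw [OpenPartialHomeomorph.prod_target, t₁.target_eq, t₂.target_eq]
    ext ⟨⟨x₁, x₂⟩, v₁, v₂⟩
    simp [Homeomorph.prodProdProdComm, Equiv.prodProdProdComm, and_assoc, and_left_comm]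
  proj_toFun p hp := Prod.ext_iff.mpr ⟨t₁.proj_toFun p.1 hp.1, t₂.proj_toFun p.2 hp.2⟩

theorem isCoveringMap_prodMap {E₁ X₁ E₂ X₂ : Type} [TopologicalSpace E₁] [TopologicalSpace X₁]
    [TopologicalSpace E₂] [TopologicalSpace X₂] {f : E₁ → X₁} {g : E₂ → X₂}
    (hf : IsCoveringMap f) (hg : IsCoveringMap g) : IsCoveringMap (Prod.map f g) := by
  intro x
  obtain ⟨d₁, U₁, hx₁, hU₁, hfU₁, H₁, hH₁⟩ := hf x.1
  obtain ⟨d₂, U₂, hx₂, hU₂, hfU₂, H₂, hH₂⟩ := hg x.2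
  haveI := d₁; haveI := d₂
  refine IsEvenlyCovered.to_isEvenlyCovered_preimage
    (I := f ⁻¹' {x.1} × g ⁻¹' {x.2})
    ⟨inferInstance, U₁ ×ˢ U₂, ⟨hx₁, hx₂⟩, hU₁.prod hU₂, hfU₁.prod hfU₂,
      (((Homeomorph.Set.prod (f ⁻¹' U₁) (g ⁻¹' U₂)).trans (H₁.prodCongr H₂)).trans
        ((Homeomorph.prodProdProdComm U₁ _ U₂ _).trans
          ((Homeomorph.Set.prod U₁ U₂).symm.prodCongr (Homeomorph.refl _)))), fun w => ?_⟩
  exact Prod.ext (hH₁ _) (hH₂ _)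

theorem simplyConnectedSpace_prod [SimplyConnectedSpace A] [SimplyConnectedSpace B] :
    SimplyConnectedSpace (A × B) := by
  have pc : PathConnectedSpace (A × B) := by
    haveI pA : PathConnectedSpace A := inferInstance
    haveI pB : PathConnectedSpace B := inferInstance
    obtain ⟨a⟩ := pA.nonempty
    obtain ⟨b⟩ := pB.nonempty
    exact ⟨⟨(a, b)⟩, fun u v =>
      ⟨(PathConnectedSpace.somePath u.1 v.1).prod (PathConnectedSpace.somePath u.2 v.2)⟩⟩
  rw [simply_connected_iff_paths_homotopic']
  refine ⟨pc, fun {x y} p q => ?_⟩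
  obtain ⟨H₁⟩ := SimplyConnectedSpace.paths_homotopic
    (p.map continuous_fst) (q.map continuous_fst)
  obtain ⟨H₂⟩ := SimplyConnectedSpace.paths_homotopic
    (p.map continuous_snd) (q.map continuous_snd)
  have e1 : (p.map continuous_fst).prod (p.map continuous_snd) = p := by ext t <;> rfl
  have e2 : (q.map continuous_fst).prod (q.map continuous_snd) = q := by ext t <;> rfl
  exact ⟨e1 ▸ e2 ▸ Path.Homotopic.prodHomotopy H₁ H₂⟩

theorem isUniversalCover_prodMap {X₁' X₁ X₂' X₂ : Type} [TopologicalSpace X₁']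
    [TopologicalSpace X₁] [TopologicalSpace X₂'] [TopologicalSpace X₂]
    {c₁ : C(X₁', X₁)} {c₂ : C(X₂', X₂)} (h₁ : IsUniversalCover c₁) (h₂ : IsUniversalCover c₂) :
    IsUniversalCover (c₁.prodMap c₂) := by
  obtain ⟨hc₁, hs₁⟩ := h₁
  obtain ⟨hc₂, hs₂⟩ := h₂
  constructor
  · show IsCoveringMap ⇑(c₁.prodMap c₂)
    rw [show ⇑(c₁.prodMap c₂) = Prod.map ⇑c₁ ⇑c₂ from rfl]
    exact isCoveringMap_prodMap hc₁ hc₂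
  · haveI := hs₁; haveI := hs₂
    exact simplyConnectedSpace_prod

end ProdAux

end Aux

/-- Lemma 2.2 of the paper: the class `𝐏` is closed under finite products. -/
theorem classP_prod (X Y : Type) [TopologicalSpace X] [TopologicalSpace Y]
    (hX : ClassP X) (hY : ClassP Y) : ClassP (X × Y) := by
  obtain ⟨hXc, -, Y₁, tY₁, hY₁c, -, ⟨Y₁', tY₁', c₁, hc₁, l₁, hGPT₁⟩, hret₁⟩ := hX
  obtain ⟨hYc, -, Y₂, tY₂, hY₂c, -, ⟨Y₂', tY₂', c₂, hc₂, l₂, hGPT₂⟩, hret₂⟩ := hY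
  letI := tY₁; letI := tY₂; letI := tY₁'; letI := tY₂'
  haveI := hXc; haveI := hYc; haveI := hY₁c; haveI := hY₂c
  refine ⟨inferInstance, fun h => absurd h (by decide), Y₁ × Y₂, inferInstance, inferInstance,
    fun h => absurd h (by decide),
    ⟨Y₁' × Y₂', inferInstance, c₁.prodMap c₂, ProdAux.isUniversalCover_prodMap hc₁ hc₂,
      max l₁ l₂, ProdAux.hasGPT_prod (ProdAux.hasGPT_mono hGPT₁ (le_max_left _ _))
        (ProdAux.hasGPT_mono hGPT₂ (le_max_right _ _))⟩,
    ProdAux.homotopyRetract_prod hret₁ hret₂⟩
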